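/- Let Z be a real-valued random variable with a log-concave density g, and let m be a mode of Z, i.e., a point where g attains its maximum M(Z) = g(m). Then M(Z)^2 · E(Z - m)^2 ≤ 2. (Proposition 6.1.) -/

import Mathlib

open MeasureTheory ProbabilityTheory Real
open Set

lemma exp_int1 {l : ℝ} (hl : 0 < l) :
    ∫ r in Ioi (0:ℝ), Real.exp (-(l * r)) = 1 / l := by
  have h := Real.integral_rpow_mul_exp_neg_mul_Ioi (a := 1) one_pos hl
  rw [Real.Gamma_one] at h
  calc ∫ r in Ioi (0:ℝ), Real.exp (-(l * r))
      = ∫ r in Ioi (0:ℝ), r ^ ((1:ℝ) - 1) * Real.exp (-(l * r)) := by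
        refine setIntegral_congr_fun measurableSet_Ioi fun r hr => ?_
        rw [sub_self, Real.rpow_zero, one_mul]
    _ = (1/l) ^ (1:ℝ) * 1 := h
    _ = 1 / l := by rw [Real.rpow_one, mul_one]

lemma exp_int2 {l : ℝ} (hl : 0 < l) :
    ∫ r in Ioi (0:ℝ), r ^ 2 * Real.exp (-(l * r)) = 2 / l ^ 3 := by
  have h := Real.integral_rpow_mul_exp_neg_mul_Ioi (a := 3) (by norm_num) hl
  have hG : Real.Gamma 3 = 2 := by
    rw [(by norm_num : (3:ℝ) = (2:ℕ) + 1), Real.Gamma_nat_eq_factorial]; norm_num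
  rw [hG] at h
  calc ∫ r in Ioi (0:ℝ), r ^ 2 * Real.exp (-(l * r))
      = ∫ r in Ioi (0:ℝ), r ^ ((3:ℝ) - 1) * Real.exp (-(l * r)) := by
        refine setIntegral_congr_fun measurableSet_Ioi fun r hr => ?_
        norm_num [Real.rpow_natCast r 2]
    _ = (1/l) ^ (3:ℝ) * 2 := h
    _ = 2 / l ^ 3 := by
        rw [(by norm_num : (3:ℝ) = ((3:ℕ):ℝ)), Real.rpow_natCast]
        field_simp

lemma exp_integrable {l : ℝ} (hl : 0 < l) :
    IntegrableOn (fun r : ℝ => Real.exp (-(l * r))) (Ioi 0) := by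
  simpa [neg_mul] using exp_neg_integrableOn_Ioi 0 hl

lemma exp_sq_integrable {l : ℝ} (hl : 0 < l) :
    IntegrableOn (fun r : ℝ => r ^ 2 * Real.exp (-(l * r))) (Ioi 0) := by
  have h := integrableOn_rpow_mul_exp_neg_mul_rpow (p := 1) (s := 2) (by norm_num) one_pos hl
  refine h.congr_fun (fun r hr => ?_) measurableSet_Ioi
  beta_reduce
  rw [Real.rpow_one, neg_mul, Real.rpow_two]

lemma key_side (h : ℝ → ℝ) (hmeas : Measurable h) (h0 : ∀ r, 0 ≤ h r) {M p : ℝ}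
    (hM : 0 < M) (hp : 0 < p)
    (hint : ∫⁻ r in Ioi (0:ℝ), ENNReal.ofReal (h r) = ENNReal.ofReal p)
    (hlc : ∀ r s : ℝ, 0 < s → s ≤ r → M ^ (1 - s / r) * h r ^ (s / r) ≤ h s) :
    ENNReal.ofReal (M ^ 2) * ∫⁻ r in Ioi (0:ℝ), ENNReal.ofReal (r ^ 2 * h r)
      ≤ ENNReal.ofReal (2 * p ^ 3) := by
  set l : ℝ := M / p with hldef
  have hl : 0 < l := div_pos hM hp
  set ψ : ℝ → ℝ := fun r => M * Real.exp (-(l * r)) with hψdef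
  have hψpos : ∀ r, 0 < ψ r := fun r => mul_pos hM (Real.exp_pos _)
  have hψcont : Continuous ψ := by continuity
  have hψmeas : Measurable fun r => ENNReal.ofReal (ψ r) :=
    ENNReal.measurable_ofReal.comp hψcont.measurable
  have hhmeas : Measurable fun r => ENNReal.ofReal (h r) :=
    hmeas.ennreal_ofReal
  have hm1 : Measurable fun r : ℝ => ENNReal.ofReal (r ^ 2 * h r) :=
    ENNReal.measurable_ofReal.comp ((measurable_id.pow_const 2).mul hmeas)
  -- ψ integrals
  have hm2 : Measurable fun r : ℝ => ENNReal.ofReal (r ^ 2 * ψ r) :=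
    ENNReal.measurable_ofReal.comp ((measurable_id.pow_const 2).mul hψcont.measurable)
  have hψint : Integrable ψ (volume.restrict (Ioi 0)) := (exp_integrable hl).const_mul M
  have F1 : ∫⁻ r in Ioi (0:ℝ), ENNReal.ofReal (ψ r) = ENNReal.ofReal p := by
    rw [← ofReal_integral_eq_lintegral_ofReal hψint
      (ae_of_all _ fun r => (hψpos r).le)]
    congr 1
    rw [hψdef]
    rw [MeasureTheory.integral_const_mul, exp_int1 hl, hldef]
    field_simp
  have hψsqint : Integrable (fun r => r ^ 2 * ψ r) (volume.restrict (Ioi 0)) := by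
    have := (exp_sq_integrable hl).const_mul M
    refine this.congr (ae_of_all _ fun r => by rw [hψdef]; ring)
  have F2 : ∫⁻ r in Ioi (0:ℝ), ENNReal.ofReal (r ^ 2 * ψ r)
      = ENNReal.ofReal (2 * p ^ 3 / M ^ 2) := by
    rw [← ofReal_integral_eq_lintegral_ofReal hψsqint
      (ae_of_all _ fun r => mul_nonneg (sq_nonneg r) (hψpos r).le)]
    congr 1
    have : ∀ r : ℝ, r ^ 2 * ψ r = M * (r ^ 2 * Real.exp (-(l * r))) := fun r => by
      rw [hψdef]; ring
    rw [MeasureTheory.integral_congr_ae (ae_of_all _ this), MeasureTheory.integral_const_mul,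
      exp_int2 hl, hldef]
    field_simp
  -- crossing set
  have hclose : ∀ s r : ℝ, 0 < s → s ≤ r → h s ≤ ψ s → h r ≤ ψ r := by
    intro s r hs hsr hle
    have hr : 0 < r := lt_of_lt_of_le hs hsr
    set t := s / r with htdef
    have ht0 : 0 < t := div_pos hs hr
    have h1 : M ^ (1 - t) * h r ^ t ≤ h s := hlc r s hs hsr
    have hψid : ψ s = M ^ (1 - t) * ψ r ^ t := by
      rw [hψdef]
      simp only []
      rw [Real.mul_rpow hM.le (Real.exp_pos _).le, ← Real.exp_mul, ← mul_assoc]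
      have hMt : M ^ (1 - t) * M ^ t = M := by
        rw [← Real.rpow_add hM]; norm_num
      rw [hMt]
      congr 2
      rw [htdef]
      field_simp
    have h2 : M ^ (1 - t) * h r ^ t ≤ M ^ (1 - t) * ψ r ^ t := by
      rw [← hψid]; exact le_trans h1 hle
    have h3 : h r ^ t ≤ ψ r ^ t :=
      le_of_mul_le_mul_left (by linarith [h2]) (Real.rpow_pos_of_pos hM (1 - t))
    by_contra hcon
    push_neg at hcon
    exact absurd h3 (not_le.2 (Real.rpow_lt_rpow (hψpos r).le hcon ht0))
  set S : Set ℝ := {r | 0 < r ∧ h r ≤ ψ r} with hSdef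
  have hSne : S.Nonempty := by
    by_contra hS
    have hlt : ∀ r : ℝ, 0 < r → ψ r < h r := by
      intro r hr
      by_contra hcon
      push_neg at hcon
      exact hS ⟨r, hr, hcon⟩
    have hAB : (∫⁻ r in Ioo (0:ℝ) 1, ENNReal.ofReal (ψ r))
        < ∫⁻ r in Ioo (0:ℝ) 1, ENNReal.ofReal (h r) := by
      refine lintegral_strict_mono ?_ hhmeas.aemeasurable ?_ ?_
      · simp [Measure.restrict_eq_zero, Real.volume_Ioo]
      · refine ne_top_of_le_ne_top (by simp : ENNReal.ofReal p ≠ ⊤) ?_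
        rw [← F1]
        exact lintegral_mono_set Ioo_subset_Ioi_self
      · refine (ae_restrict_iff' measurableSet_Ioo).2 (ae_of_all _ fun r hr => ?_)
        exact ENNReal.ofReal_lt_ofReal_iff_of_nonneg (hψpos r).le |>.2 (hlt r hr.1)
    have hsplit : ∀ f : ℝ → ENNReal, Measurable f →
        (∫⁻ r in Ioi (0:ℝ), f r)
          = (∫⁻ r in Ioo (0:ℝ) 1, f r) + ∫⁻ r in Ici (1:ℝ), f r := by
      intro f hf
      rw [← lintegral_union measurableSet_Ici ?_, Ioo_union_Ici_eq_Ioi (by norm_num : (0:ℝ) < 1)]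
      exact Set.disjoint_left.2 fun r hr1 hr2 => absurd hr1.2 (not_lt.2 hr2)
    have htail : (∫⁻ r in Ici (1:ℝ), ENNReal.ofReal (ψ r))
        ≤ ∫⁻ r in Ici (1:ℝ), ENNReal.ofReal (h r) := by
      refine setLIntegral_mono hhmeas fun r hr => ?_
      exact ENNReal.ofReal_le_ofReal (hlt r (lt_of_lt_of_le one_pos hr)).le
    have hfin : (∫⁻ r in Ici (1:ℝ), ENNReal.ofReal (ψ r)) ≠ ⊤ := by
      refine ne_top_of_le_ne_top (by simp : ENNReal.ofReal p ≠ ⊤) ?_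
      rw [← F1]
      exact lintegral_mono_set (Ici_subset_Ioi.2 one_pos)
    have : ENNReal.ofReal p < ENNReal.ofReal p := by
      calc ENNReal.ofReal p = ∫⁻ r in Ioi (0:ℝ), ENNReal.ofReal (ψ r) := F1.symm
        _ = (∫⁻ r in Ioo (0:ℝ) 1, ENNReal.ofReal (ψ r))
            + ∫⁻ r in Ici (1:ℝ), ENNReal.ofReal (ψ r) := hsplit _ hψmeas
        _ < (∫⁻ r in Ioo (0:ℝ) 1, ENNReal.ofReal (h r))
            + ∫⁻ r in Ici (1:ℝ), ENNReal.ofReal (ψ r) := ENNReal.add_lt_add_right hfin hAB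
        _ ≤ (∫⁻ r in Ioo (0:ℝ) 1, ENNReal.ofReal (h r))
            + ∫⁻ r in Ici (1:ℝ), ENNReal.ofReal (h r) := add_le_add le_rfl htail
        _ = ∫⁻ r in Ioi (0:ℝ), ENNReal.ofReal (h r) := (hsplit _ hhmeas).symm
        _ = ENNReal.ofReal p := hint
    exact absurd this (lt_irrefl _)
  set c : ℝ := sInf S with hcdef
  have hbdd : BddBelow S := ⟨0, fun s hs => hs.1.le⟩
  have hc0 : 0 ≤ c := le_csInf hSne fun s hs => hs.1.le
  have P1 : ∀ r : ℝ, 0 < r → r < c → ψ r ≤ h r := by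
    intro r hr hrc
    by_contra hcon
    push_neg at hcon
    exact absurd (csInf_le hbdd ⟨hr, hcon.le⟩) (not_le.2 hrc)
  have P2 : ∀ r : ℝ, c < r → h r ≤ ψ r := by
    intro r hrc
    obtain ⟨s, hsS, hsr⟩ := exists_lt_of_csInf_lt hSne hrc
    exact hclose s r hsS.1 hsr.le hsS.2
  have F4 : ∀ r ∈ Ioi (0:ℝ), r ^ 2 * h r + c ^ 2 * ψ r ≤ r ^ 2 * ψ r + c ^ 2 * h r := by
    intro r hr
    simp only [mem_Ioi] at hr
    rcases lt_trichotomy r c with h1 | h1 | h1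
    · have hhp := P1 r hr h1
      have hr2 : r ^ 2 ≤ c ^ 2 := by nlinarith
      nlinarith [mul_nonneg (sub_nonneg.2 hr2) (sub_nonneg.2 hhp)]
    · rw [h1]; linarith
    · have hhp := P2 r h1
      have hr2 : c ^ 2 ≤ r ^ 2 := by nlinarith
      nlinarith [mul_nonneg (sub_nonneg.2 hr2) (sub_nonneg.2 hhp)]
  -- main comparison
  have e1 : ∫⁻ r in Ioi (0:ℝ), ENNReal.ofReal (c ^ 2 * ψ r)
      = ENNReal.ofReal (c ^ 2) * ENNReal.ofReal p := by
    rw [← F1, ← lintegral_const_mul _ hψmeas]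
    exact lintegral_congr fun r => (ENNReal.ofReal_mul (sq_nonneg c)).symm ▸ rfl
  have e2 : ∫⁻ r in Ioi (0:ℝ), ENNReal.ofReal (c ^ 2 * h r)
      = ENNReal.ofReal (c ^ 2) * ENNReal.ofReal p := by
    rw [← hint, ← lintegral_const_mul _ hhmeas]
    exact lintegral_congr fun r => (ENNReal.ofReal_mul (sq_nonneg c)).symm ▸ rfl
  have step : (∫⁻ r in Ioi (0:ℝ), ENNReal.ofReal (r ^ 2 * h r))
      + ENNReal.ofReal (c ^ 2) * ENNReal.ofReal p
      ≤ ENNReal.ofReal (2 * p ^ 3 / M ^ 2) + ENNReal.ofReal (c ^ 2) * ENNReal.ofReal p := by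
    calc (∫⁻ r in Ioi (0:ℝ), ENNReal.ofReal (r ^ 2 * h r))
        + ENNReal.ofReal (c ^ 2) * ENNReal.ofReal p
        = (∫⁻ r in Ioi (0:ℝ), ENNReal.ofReal (r ^ 2 * h r))
          + ∫⁻ r in Ioi (0:ℝ), ENNReal.ofReal (c ^ 2 * ψ r) := by rw [e1]
      _ = ∫⁻ r in Ioi (0:ℝ),
            (ENNReal.ofReal (r ^ 2 * h r) + ENNReal.ofReal (c ^ 2 * ψ r)) := by
          rw [lintegral_add_left hm1]
      _ = ∫⁻ r in Ioi (0:ℝ), ENNReal.ofReal (r ^ 2 * h r + c ^ 2 * ψ r) := by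
          refine lintegral_congr fun r => ?_
          rw [ENNReal.ofReal_add (mul_nonneg (sq_nonneg r) (h0 r))
            (mul_nonneg (sq_nonneg c) (hψpos r).le)]
      _ ≤ ∫⁻ r in Ioi (0:ℝ), ENNReal.ofReal (r ^ 2 * ψ r + c ^ 2 * h r) := by
          refine setLIntegral_mono (ENNReal.measurable_ofReal.comp
            (((measurable_id.pow_const 2).mul hψcont.measurable).add
              (hmeas.const_mul (c ^ 2)))) fun r hr => ?_
          exact ENNReal.ofReal_le_ofReal (F4 r hr)
      _ = ∫⁻ r in Ioi (0:ℝ),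
            (ENNReal.ofReal (r ^ 2 * ψ r) + ENNReal.ofReal (c ^ 2 * h r)) := by
          refine lintegral_congr fun r => ?_
          rw [ENNReal.ofReal_add (mul_nonneg (sq_nonneg r) (hψpos r).le)
            (mul_nonneg (sq_nonneg c) (h0 r))]
      _ = (∫⁻ r in Ioi (0:ℝ), ENNReal.ofReal (r ^ 2 * ψ r))
          + ∫⁻ r in Ioi (0:ℝ), ENNReal.ofReal (c ^ 2 * h r) := by
          rw [lintegral_add_left hm2]
      _ = ENNReal.ofReal (2 * p ^ 3 / M ^ 2) + ENNReal.ofReal (c ^ 2) * ENNReal.ofReal p := by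
          rw [F2, e2]
  have main : (∫⁻ r in Ioi (0:ℝ), ENNReal.ofReal (r ^ 2 * h r))
      ≤ ENNReal.ofReal (2 * p ^ 3 / M ^ 2) := by
    refine (ENNReal.add_le_add_iff_right ?_).mp step
    exact ENNReal.mul_ne_top ENNReal.ofReal_ne_top ENNReal.ofReal_ne_top
  calc ENNReal.ofReal (M ^ 2) * ∫⁻ r in Ioi (0:ℝ), ENNReal.ofReal (r ^ 2 * h r)
      ≤ ENNReal.ofReal (M ^ 2) * ENNReal.ofReal (2 * p ^ 3 / M ^ 2) :=
        mul_le_mul' le_rfl main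
    _ = ENNReal.ofReal (2 * p ^ 3) := by
        rw [← ENNReal.ofReal_mul (sq_nonneg M)]
        congr 1
        field_simp


/-- Proposition 6.1: if a real-valued random variable `Z` has a log-concave density
`g` with mode at `m` (i.e. `g` attains its maximum `M(Z) = g(m)` at `m`), then
`M(Z)^2 · E(Z - m)^2 ≤ 2`. -/
theorem logConcave_density_mode_second_moment
    {Ω : Type*} [MeasurableSpace Ω] (μ : Measure Ω) [IsProbabilityMeasure μ]
    (Z : Ω → ℝ) (hZ : Measurable Z)
    (g : ℝ → ℝ) (hg : ∀ x, 0 ≤ g x)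
    (hdens : Measure.map Z μ = volume.withDensity (fun x => ENNReal.ofReal (g x)))
    (hlc : ∀ x y t : ℝ, 0 ≤ t → t ≤ 1 →
      g x ^ (1 - t) * g y ^ t ≤ g ((1 - t) * x + t * y))
    (m : ℝ) (hm : ∀ x, g x ≤ g m) :
    ENNReal.ofReal (g m ^ 2) * ∫⁻ ω, ENNReal.ofReal ((Z ω - m) ^ 2) ∂μ ≤ 2 := by
  set M := g m with hMdef
  -- monotonicity of g on the two sides of the mode
  have gmono : ∀ x y : ℝ, x ≤ y → y ≤ m → g x ≤ g y := by
    intro x y hxy hym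
    rcases eq_or_lt_of_le hxy with rfl | hxy'
    · exact le_rfl
    · have hxm : x < m := lt_of_lt_of_le hxy' hym
      set t := (y - x) / (m - x) with htdef
      have hmx : 0 < m - x := by linarith
      have ht0 : 0 ≤ t := div_nonneg (by linarith) hmx.le
      have ht1 : t ≤ 1 := by rw [htdef, div_le_one hmx]; linarith
      have hcomb : (1 - t) * x + t * m = y := by rw [htdef]; field_simp; ring
      have h1 := hlc x m t ht0 ht1
      rw [hcomb] at h1
      rcases eq_or_lt_of_le (hg x) with hx0 | hx0
      · exact le_trans (le_of_eq hx0.symm) (hg y)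
      · calc g x = g x ^ (1 - t) * g x ^ t := by
                  rw [← Real.rpow_add hx0]; norm_num
          _ ≤ g x ^ (1 - t) * g m ^ t :=
            mul_le_mul_of_nonneg_left (Real.rpow_le_rpow (hg x) (hm x) ht0)
              (Real.rpow_nonneg (hg x) _)
          _ ≤ g y := h1
  have ganti : ∀ x y : ℝ, m ≤ x → x ≤ y → g y ≤ g x := by
    intro x y hmx hxy
    rcases eq_or_lt_of_le hxy with rfl | hxy'
    · exact le_rfl
    · have hmy : m < y := lt_of_le_of_lt hmx hxy'
      set t := (x - m) / (y - m) with htdef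
      have hym : 0 < y - m := by linarith
      have ht0 : 0 ≤ t := div_nonneg (by linarith) hym.le
      have ht1 : t ≤ 1 := by rw [htdef, div_le_one hym]; linarith
      have hcomb : (1 - t) * m + t * y = x := by rw [htdef]; field_simp; ring
      have h1 := hlc m y t ht0 ht1
      rw [hcomb] at h1
      rcases eq_or_lt_of_le (hg y) with hy0 | hy0
      · exact le_trans (le_of_eq hy0.symm) (hg x)
      · calc g y = g y ^ (1 - t) * g y ^ t := by
                  rw [← Real.rpow_add hy0]; norm_num
          _ ≤ g m ^ (1 - t) * g y ^ t :=
            mul_le_mul_of_nonneg_right (Real.rpow_le_rpow (hg y) (hm y) (by linarith))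
              (Real.rpow_nonneg (hg y) _)
          _ ≤ g x := h1
  have gmeas : Measurable g := by
    have m1 : Monotone fun x => g (min x m) := fun a b hab =>
      gmono _ _ (min_le_min hab le_rfl) (min_le_right _ _)
    have m2 : Antitone fun x => g (max x m) := fun a b hab =>
      ganti _ _ (le_max_right _ _) (max_le_max hab le_rfl)
    have hg' : g = fun x => if x ≤ m then g (min x m) else g (max x m) := by
      funext x
      split_ifs with hx
      · rw [min_eq_left hx]
      · rw [max_eq_left (le_of_not_ge hx)]
    rw [hg']
    exact Measurable.ite measurableSet_Iic m1.measurable m2.measurable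
  have gof : Measurable fun x => ENNReal.ofReal (g x) :=
    gmeas.ennreal_ofReal
  -- total mass
  have htot : ∫⁻ x, ENNReal.ofReal (g x) = 1 := by
    have h1 : (Measure.map Z μ) univ = 1 := by
      rw [Measure.map_apply hZ MeasurableSet.univ]; simp
    rw [hdens] at h1
    rwa [withDensity_apply _ MeasurableSet.univ, Measure.restrict_univ] at h1
  have hM : 0 < M := by
    by_contra hc
    push_neg at hc
    have hzero : ∀ x : ℝ, ENNReal.ofReal (g x) = (0:ENNReal) := fun x =>
      ENNReal.ofReal_eq_zero.2 (le_trans (hm x) hc)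
    have h0 : ∫⁻ x, ENNReal.ofReal (g x) = ∫⁻ (_ : ℝ), (0:ENNReal) :=
      lintegral_congr hzero
    rw [h0, lintegral_zero] at htot
    exact zero_ne_one htot
  -- change of variables
  have hCoV : ∀ F : ℝ → ENNReal, Measurable F →
      (∫⁻ x in Ioi m, F x) = ∫⁻ r in Ioi (0:ℝ), F (m + r) := by
    intro F hF
    have hpre : (fun r : ℝ => m + r) ⁻¹' (Ioi m) = Ioi 0 := by
      ext r; simp
    have := (measurePreserving_add_left volume m).setLIntegral_comp_preimage
      (s := Ioi m) measurableSet_Ioi hF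
    rw [hpre] at this
    exact this.symm
  have hCoV' : ∀ F : ℝ → ENNReal, Measurable F →
      (∫⁻ x in Iio m, F x) = ∫⁻ r in Ioi (0:ℝ), F (m - r) := by
    intro F hF
    have hpre : (fun r : ℝ => m - r) ⁻¹' (Iio m) = Ioi 0 := by
      ext r; simp
    have hsub : MeasurePreserving (fun t : ℝ => m - t) volume volume := by
      have h4 := (measurePreserving_add_left volume m).comp
        (Measure.measurePreserving_neg volume)
      simpa [Function.comp_def, sub_eq_add_neg] using h4
    have := hsub.setLIntegral_comp_preimage (s := Iio m) measurableSet_Iio hF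
    rw [hpre] at this
    exact this.symm
  -- the two half masses
  set P := ∫⁻ r in Ioi (0:ℝ), ENNReal.ofReal (g (m + r)) with hPdef
  set Q := ∫⁻ r in Ioi (0:ℝ), ENNReal.ofReal (g (m - r)) with hQdef
  have hPQ : P + Q ≤ 1 := by
    rw [hPdef, hQdef, ← hCoV _ gof, ← hCoV' _ gof]
    calc (∫⁻ x in Ioi m, ENNReal.ofReal (g x)) + ∫⁻ x in Iio m, ENNReal.ofReal (g x)
        ≤ (∫⁻ x in Ici m, ENNReal.ofReal (g x)) + ∫⁻ x in Iio m, ENNReal.ofReal (g x) :=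
          add_le_add (lintegral_mono_set Ioi_subset_Ici_self) le_rfl
      _ = 1 := by
        have h2 := lintegral_add_compl (μ := volume) (A := Iio m)
          (fun x => ENNReal.ofReal (g x)) measurableSet_Iio
        rw [compl_Iio] at h2
        rw [← htot, ← h2]
        exact add_comm _ _
  have hPne : P ≠ ⊤ := ne_top_of_le_ne_top ENNReal.one_ne_top (le_trans le_self_add hPQ)
  have hQne : Q ≠ ⊤ := ne_top_of_le_ne_top ENNReal.one_ne_top (le_trans le_add_self hPQ)
  set p := P.toReal with hpdef
  set q := Q.toReal with hqdef
  have hPof : P = ENNReal.ofReal p := (ENNReal.ofReal_toReal hPne).symm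
  have hQof : Q = ENNReal.ofReal q := (ENNReal.ofReal_toReal hQne).symm
  have hpq : p + q ≤ 1 := by
    have h3 := ENNReal.toReal_mono ENNReal.one_ne_top hPQ
    rwa [ENNReal.toReal_add hPne hQne, ENNReal.toReal_one] at h3
  -- the generic one-sided bound
  have side : ∀ h : ℝ → ℝ, Measurable h → (∀ r, 0 ≤ h r) →
      (∀ r s : ℝ, 0 < s → s ≤ r → M ^ (1 - s / r) * h r ^ (s / r) ≤ h s) →
      ∀ pp : ℝ, 0 ≤ pp →
      (∫⁻ r in Ioi (0:ℝ), ENNReal.ofReal (h r)) = ENNReal.ofReal pp →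
      ENNReal.ofReal (M ^ 2) * (∫⁻ r in Ioi (0:ℝ), ENNReal.ofReal (r ^ 2 * h r))
        ≤ ENNReal.ofReal (2 * pp ^ 3) := by
    intro h hmeas h0 hlcR pp hpp hint
    rcases eq_or_lt_of_le hpp with hpp0 | hpp0
    · have hz : (∫⁻ r in Ioi (0:ℝ), ENNReal.ofReal (h r)) = 0 := by
        rw [hint, ← hpp0]; simp
      rw [lintegral_eq_zero_iff (hmeas.ennreal_ofReal)] at hz
      have hz2 : (∫⁻ r in Ioi (0:ℝ), ENNReal.ofReal (r ^ 2 * h r)) = 0 := by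
        rw [lintegral_eq_zero_iff
          (by exact ((measurable_id'.pow_const 2).mul hmeas).ennreal_ofReal
            : Measurable fun r : ℝ => ENNReal.ofReal (r ^ 2 * h r))]
        filter_upwards [hz] with r hr
        simp only [Pi.zero_apply] at hr ⊢
        rw [ENNReal.ofReal_eq_zero] at hr ⊢
        nlinarith [sq_nonneg r]
      rw [hz2, mul_zero]
      exact zero_le
    · exact key_side h hmeas h0 hM hpp0 hint hlcR
  -- log-concavity along rays
  have hlcRight : ∀ r s : ℝ, 0 < s → s ≤ r →
      M ^ (1 - s / r) * g (m + r) ^ (s / r) ≤ g (m + s) := by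
    intro r s hs hsr
    have hr : 0 < r := lt_of_lt_of_le hs hsr
    have ht0 : 0 ≤ s / r := (div_pos hs hr).le
    have ht1 : s / r ≤ 1 := (div_le_one hr).2 hsr
    have h1 := hlc m (m + r) (s / r) ht0 ht1
    have hcomb : (1 - s / r) * m + s / r * (m + r) = m + s := by field_simp; ring
    rwa [hcomb] at h1
  have hlcLeft : ∀ r s : ℝ, 0 < s → s ≤ r →
      M ^ (1 - s / r) * g (m - r) ^ (s / r) ≤ g (m - s) := by
    intro r s hs hsr
    have hr : 0 < r := lt_of_lt_of_le hs hsr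
    have ht0 : 0 ≤ s / r := (div_pos hs hr).le
    have ht1 : s / r ≤ 1 := (div_le_one hr).2 hsr
    have h1 := hlc m (m - r) (s / r) ht0 ht1
    have hcomb : (1 - s / r) * m + s / r * (m - r) = m - s := by field_simp; ring
    rwa [hcomb] at h1
  -- rewrite the LHS integral
  have fmeas : Measurable fun x : ℝ => ENNReal.ofReal ((x - m) ^ 2 * g x) :=
    (((measurable_id.sub_const m).pow_const 2).mul gmeas).ennreal_ofReal
  have hmap : ∫⁻ ω, ENNReal.ofReal ((Z ω - m) ^ 2) ∂μ
      = ∫⁻ x, ENNReal.ofReal ((x - m) ^ 2) * ENNReal.ofReal (g x) := by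
    rw [← lintegral_map (f := fun x : ℝ => ENNReal.ofReal ((x - m) ^ 2))
      (((measurable_id'.sub_const m).pow_const 2).ennreal_ofReal) hZ, hdens,
      lintegral_withDensity_eq_lintegral_mul _ (gmeas.ennreal_ofReal)
        (((measurable_id'.sub_const m).pow_const 2).ennreal_ofReal
          : Measurable fun x : ℝ => ENNReal.ofReal ((x - m) ^ 2))]
    exact lintegral_congr fun x => by simp only [Pi.mul_apply]; exact mul_comm _ _
  have hmap2 : ∫⁻ x, ENNReal.ofReal ((x - m) ^ 2) * ENNReal.ofReal (g x)
      = ∫⁻ x, ENNReal.ofReal ((x - m) ^ 2 * g x) :=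
    lintegral_congr fun x => (ENNReal.ofReal_mul (sq_nonneg _)).symm
  have hsplit : ∫⁻ x, ENNReal.ofReal ((x - m) ^ 2 * g x)
      = (∫⁻ x in Iio m, ENNReal.ofReal ((x - m) ^ 2 * g x))
        + ∫⁻ x in Ici m, ENNReal.ofReal ((x - m) ^ 2 * g x) := by
    have h2 := lintegral_add_compl (μ := volume) (A := Iio m)
      (fun x => ENNReal.ofReal ((x - m) ^ 2 * g x)) measurableSet_Iio
    rw [compl_Iio] at h2
    exact h2.symm
  have hIci : ∫⁻ x in Ici m, ENNReal.ofReal ((x - m) ^ 2 * g x)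
      = ∫⁻ x in Ioi m, ENNReal.ofReal ((x - m) ^ 2 * g x) :=
    (setLIntegral_congr Ioi_ae_eq_Ici).symm
  have hright : ∫⁻ x in Ioi m, ENNReal.ofReal ((x - m) ^ 2 * g x)
      = ∫⁻ r in Ioi (0:ℝ), ENNReal.ofReal (r ^ 2 * g (m + r)) := by
    rw [hCoV _ fmeas]
    refine setLIntegral_congr_fun measurableSet_Ioi (fun r _ => ?_)
    have : m + r - m = r := by ring
    rw [this]
  have hleft : ∫⁻ x in Iio m, ENNReal.ofReal ((x - m) ^ 2 * g x)
      = ∫⁻ r in Ioi (0:ℝ), ENNReal.ofReal (r ^ 2 * g (m - r)) := by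
    rw [hCoV' _ fmeas]
    refine setLIntegral_congr_fun measurableSet_Ioi (fun r _ => ?_)
    have : (m - r - m) ^ 2 = r ^ 2 := by ring
    rw [this]
  have hPval : (∫⁻ r in Ioi (0:ℝ), ENNReal.ofReal (g (m + r))) = ENNReal.ofReal p := by
    rw [← hPdef]; exact hPof
  have hQval : (∫⁻ r in Ioi (0:ℝ), ENNReal.ofReal (g (m - r))) = ENNReal.ofReal q := by
    rw [← hQdef]; exact hQof
  have hp0 : 0 ≤ p := ENNReal.toReal_nonneg
  have hq0 : 0 ≤ q := ENNReal.toReal_nonneg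
  calc ENNReal.ofReal (g m ^ 2) * ∫⁻ ω, ENNReal.ofReal ((Z ω - m) ^ 2) ∂μ
      = ENNReal.ofReal (M ^ 2) *
          ((∫⁻ r in Ioi (0:ℝ), ENNReal.ofReal (r ^ 2 * g (m - r)))
            + ∫⁻ r in Ioi (0:ℝ), ENNReal.ofReal (r ^ 2 * g (m + r))) := by
        rw [hmap, hmap2, hsplit, hIci, hright, hleft]
    _ = ENNReal.ofReal (M ^ 2) * (∫⁻ r in Ioi (0:ℝ), ENNReal.ofReal (r ^ 2 * g (m - r)))
        + ENNReal.ofReal (M ^ 2) * ∫⁻ r in Ioi (0:ℝ), ENNReal.ofReal (r ^ 2 * g (m + r)) :=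
        mul_add _ _ _
    _ ≤ ENNReal.ofReal (2 * q ^ 3) + ENNReal.ofReal (2 * p ^ 3) := by
        refine add_le_add ?_ ?_
        · exact side _ (gmeas.comp (measurable_const.sub measurable_id)) (fun r => hg _)
            hlcLeft q hq0 hQval
        · exact side _ (gmeas.comp (measurable_id.const_add m)) (fun r => hg _)
            hlcRight p hp0 hPval
    _ = ENNReal.ofReal (2 * q ^ 3 + 2 * p ^ 3) :=
        (ENNReal.ofReal_add (by positivity) (by positivity)).symm
    _ ≤ ENNReal.ofReal 2 := by
        refine ENNReal.ofReal_le_ofReal ?_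
        nlinarith [mul_nonneg hp0 hq0, sq_nonneg (p + q), sq_nonneg (p - q),
          mul_nonneg (mul_nonneg hp0 hp0) hq0, mul_nonneg hp0 (mul_nonneg hq0 hq0),
          pow_le_one₀ (by positivity : (0:ℝ) ≤ p + q) hpq (n := 3)]
    _ ≤ 2 := by
        simp [ENNReal.ofReal_ofNat]
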